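/- arXiv:2103.12175 — 5 statements merged into one kernel-verified Lean document; each statement's English description precedes it below -/
import Mathlib

section
/- Let γ be Gamma distributed with shape α > 0 and rate β > 0. Then E[log₂(1+γ)] = (β^α / (Γ(α) ln 2)) · ∑_{k=1}^∞ (1/k) · Γ(k+α) · U(k+α, 1+α, β), where U is the confluent hypergeometric Kummer U function. -/
/-- Confluent hypergeometric Kummer U function (integral representation, a > 0, z > 0). -/
noncomputable def KummerU (a b z : ℝ) : ℝ :=
  (1 / Real.Gamma a) *
    ∫ u in Set.Ioi (0 : ℝ), (1 + u) ^ (b - a - 1) * u ^ (a - 1) * Real.exp (-z * u)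

/-- Density of the Gamma(α, β) distribution on (0, ∞). -/
noncomputable def gammaDens (α β u : ℝ) : ℝ :=
  β ^ α * u ^ (α - 1) * Real.exp (-β * u) / Real.Gamma α

open MeasureTheory Set Real
lemma hasSum_log_expand (α β : ℝ) {u : ℝ} (hu : 0 < u) :
    HasSum (fun k : ℕ => (1 / ((k : ℝ) + 1)) *
      ((1 + u) ^ ((1 + α) - (((k : ℝ) + 1) + α) - 1) * u ^ ((((k : ℝ) + 1) + α) - 1)
        * Real.exp (-β * u)))
      (Real.log (1 + u) * (u ^ (α - 1) * Real.exp (-β * u))) := by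
  have h1u : (0:ℝ) < 1 + u := by linarith
  set x : ℝ := u / (1 + u) with hx
  have hx0 : 0 ≤ x := by positivity
  have hx1 : x < 1 := by
    rw [hx, div_lt_one h1u]; linarith
  have habs : |x| < 1 := by rwa [abs_of_nonneg hx0]
  have h1x : 1 - x = (1 + u)⁻¹ := by
    rw [hx]; field_simp; ring
  have hlog : -Real.log (1 - x) = Real.log (1 + u) := by
    rw [h1x, Real.log_inv]; ring
  have H := (Real.hasSum_pow_div_log_of_abs_lt_one habs).mul_right
    (u ^ (α - 1) * Real.exp (-β * u))
  rw [hlog] at H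
  refine HasSum.congr_fun H fun k => ?_
  have hxpow : x ^ (k + 1) = u ^ ((k:ℝ) + 1) * (1 + u) ^ (-((k:ℝ) + 1)) := by
    rw [hx, div_pow, Real.rpow_neg h1u.le, div_eq_mul_inv]
    rw [← Real.rpow_natCast u (k+1), ← Real.rpow_natCast (1+u) (k+1)]
    push_cast
    ring_nf
  have e1 : (1 + α) - (((k : ℝ) + 1) + α) - 1 = -((k:ℝ) + 1) := by ring
  have e2 : ((((k : ℝ) + 1) + α) - 1) = ((k:ℝ) + 1) + (α - 1) := by ring
  rw [hxpow, e1, e2, Real.rpow_add hu]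
  field_simp

lemma contOn_aux (r s c : ℝ) :
    ContinuousOn (fun u : ℝ => (1 + u) ^ r * u ^ s * Real.exp (c * u)) (Set.Ioi 0) := by
  apply ContinuousOn.mul
  apply ContinuousOn.mul
  · exact ContinuousOn.rpow_const (by fun_prop) fun x hx => Or.inl (by simp at hx; positivity)
  · exact ContinuousOn.rpow_const continuousOn_id fun x hx => Or.inl (ne_of_gt hx)
  · fun_prop

lemma integrableOn_h (α β : ℝ) (hα : 0 < α) (hβ : 0 < β) :
    IntegrableOn (fun u : ℝ => Real.log (1 + u) * (u ^ (α - 1) * Real.exp (-β * u)))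
      (Set.Ioi 0) := by
  have hg : IntegrableOn (fun u : ℝ => u ^ α * Real.exp (-β * u)) (Set.Ioi 0) := by
    have := integrableOn_rpow_mul_exp_neg_mul_rpow (p := 1) (s := α) (b := β)
      (by linarith) zero_lt_one hβ
    simpa [Real.rpow_one] using this
  refine Integrable.mono' hg ?_ ?_
  · refine ContinuousOn.aestronglyMeasurable ?_ measurableSet_Ioi
    apply ContinuousOn.mul
    · exact ((continuous_const.add continuous_id).continuousOn).log
        fun x hx => by simp at hx; exact ne_of_gt (by show (0:ℝ) < 1 + x; linarith)
    · apply ContinuousOn.mul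
      · exact ContinuousOn.rpow_const continuousOn_id fun x hx => Or.inl (ne_of_gt hx)
      · fun_prop
  · rw [ae_restrict_iff' measurableSet_Ioi]
    filter_upwards with u hu
    simp only [Set.mem_Ioi] at hu
    have h1 : 0 ≤ Real.log (1 + u) := Real.log_nonneg (by linarith)
    have h2 : Real.log (1 + u) ≤ u := by
      have := Real.log_le_sub_one_of_pos (x := 1 + u) (by linarith)
      linarith
    rw [Real.norm_eq_abs, abs_of_nonneg (by positivity)]
    have : u ^ α = u * u ^ (α - 1) := by
      rw [show α = 1 + (α-1) by ring, Real.rpow_add hu, Real.rpow_one]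
      ring_nf
    rw [this]
    have he : 0 < Real.exp (-β * u) := Real.exp_pos _
    have hp : 0 ≤ u ^ (α - 1) * Real.exp (-β * u) := by positivity
    nlinarith [Real.rpow_pos_of_pos hu (α-1), mul_le_mul_of_nonneg_right h2 hp]

theorem expected_log_capacity_gamma (α β : ℝ) (hα : 0 < α) (hβ : 0 < β) :
    (∫ u in Set.Ioi (0 : ℝ), Real.logb 2 (1 + u) * gammaDens α β u) =
      β ^ α / (Real.Gamma α * Real.log 2) *
        ∑' k : ℕ, (1 / ((k : ℝ) + 1)) * Real.Gamma (((k : ℝ) + 1) + α) *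
          KummerU (((k : ℝ) + 1) + α) (1 + α) β := by
  have hlog2 : Real.log 2 ≠ 0 := by
    have : (0:ℝ) < Real.log 2 := Real.log_pos (by norm_num)
    exact this.ne'
  have hΓ : Real.Gamma α ≠ 0 := (Real.Gamma_pos_of_pos hα).ne'
  set c : ℝ := β ^ α / (Real.Gamma α * Real.log 2) with hc
  set F : ℕ → ℝ → ℝ := fun k u => (1 / ((k : ℝ) + 1)) *
      ((1 + u) ^ ((1 + α) - (((k : ℝ) + 1) + α) - 1) * u ^ ((((k : ℝ) + 1) + α) - 1)
        * Real.exp (-β * u)) with hF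
  have hFmeas : ∀ k, AEStronglyMeasurable (F k) (volume.restrict (Set.Ioi 0)) := by
    intro k
    exact ((continuousOn_const.mul (contOn_aux _ _ (-β))).aestronglyMeasurable
      measurableSet_Ioi)
  have hFnonneg : ∀ k, ∀ u ∈ Set.Ioi (0:ℝ), 0 ≤ F k u := by
    intro k u hu
    simp only [Set.mem_Ioi] at hu
    have h1u : (0:ℝ) < 1 + u := by linarith
    simp only [hF]
    positivity
  -- the finiteness condition
  have hf' : (∑' k : ℕ, ∫⁻ u in Set.Ioi (0:ℝ), ‖F k u‖ₑ) ≠ ⊤ := by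
    rw [← MeasureTheory.lintegral_tsum (fun k => (hFmeas k).enorm)]
    have heq : ∫⁻ u in Set.Ioi (0:ℝ), ∑' k : ℕ, ‖F k u‖ₑ =
        ∫⁻ u in Set.Ioi (0:ℝ),
          ENNReal.ofReal (Real.log (1 + u) * (u ^ (α - 1) * Real.exp (-β * u))) := by
      refine setLIntegral_congr_fun measurableSet_Ioi ?_
      intro u hu
      beta_reduce
      have hs := hasSum_log_expand α β hu
      rw [← hs.tsum_eq, ENNReal.ofReal_tsum_of_nonneg (fun k => hFnonneg k u hu) hs.summable]
      congr 1 with k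
      rw [← Real.enorm_eq_ofReal (hFnonneg k u hu)]
    rw [heq]
    exact (Integrable.lintegral_lt_top (integrableOn_h α β hα hβ)).ne
  have hswap := MeasureTheory.integral_tsum hFmeas hf'
  -- rewrite LHS
  have hLHS : (∫ u in Set.Ioi (0:ℝ), Real.logb 2 (1 + u) * gammaDens α β u)
      = c * ∫ u in Set.Ioi (0:ℝ), Real.log (1 + u) * (u ^ (α - 1) * Real.exp (-β * u)) := by
    rw [← integral_const_mul _ _]
    refine setIntegral_congr_fun measurableSet_Ioi fun u hu => ?_
    simp only [gammaDens, Real.logb, hc]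
    field_simp
  have hmid : (∫ u in Set.Ioi (0:ℝ), Real.log (1 + u) * (u ^ (α - 1) * Real.exp (-β * u)))
      = ∑' k : ℕ, ∫ u in Set.Ioi (0:ℝ), F k u := by
    rw [← hswap]
    refine setIntegral_congr_fun measurableSet_Ioi fun u hu => ?_
    exact ((hasSum_log_expand α β hu).tsum_eq).symm
  have hterm : ∀ k : ℕ, (∫ u in Set.Ioi (0:ℝ), F k u)
      = (1 / ((k : ℝ) + 1)) * Real.Gamma (((k : ℝ) + 1) + α) *
          KummerU (((k : ℝ) + 1) + α) (1 + α) β := by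
    intro k
    have hΓk : Real.Gamma (((k : ℝ) + 1) + α) ≠ 0 := by
      have : (0:ℝ) < ((k : ℝ) + 1) + α := by positivity
      exact (Real.Gamma_pos_of_pos this).ne'
    simp only [hF, KummerU]
    rw [integral_const_mul _ _]
    rw [mul_assoc, ← mul_assoc (Real.Gamma _), mul_one_div, div_self hΓk, one_mul]
  rw [hLHS, hmid]
  congr 1
  exact tsum_congr hterm
end

section
/- Let γ be Gamma distributed with shape α > 0 and rate β > 0. Then E[√(1 − 1/(1+γ)²)] = β^α · ∑_{n=0}^∞ (−1)^n C(1/2, n) · U(α, 1−2n+α, β), where C(1/2,n) are generalized binomial coefficients and U is the Kummer U function. -/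
/-- Generalized binomial coefficient C(1/2, n). -/
noncomputable def genBinomHalf (n : ℕ) : ℝ :=
  (∏ i ∈ Finset.range n, ((1 : ℝ) / 2 - i)) / (Nat.factorial n)

noncomputable def cc (n : ℕ) : ℝ := (-1) ^ n * genBinomHalf n

lemma cc_zero : cc 0 = 1 := by simp [cc, genBinomHalf]

lemma cc_one : cc 1 = -(1/2) := by
  simp [cc, genBinomHalf, Finset.prod_range_one]

lemma cc_succ (n : ℕ) : cc (n + 1) = cc n * (((n : ℝ) - 1/2) / (n + 1)) := by
  simp only [cc, genBinomHalf, Finset.prod_range_succ, Nat.factorial_succ]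
  push_cast
  field_simp
  ring

lemma cc_nonpos {n : ℕ} (hn : 1 ≤ n) : cc n ≤ 0 := by
  induction n with
  | zero => omega
  | succ m ih =>
    rcases Nat.eq_or_lt_of_le hn with h | h
    · obtain rfl : m = 0 := by omega
      rw [cc_one]; norm_num
    · have hm : 1 ≤ m := by omega
      have := ih hm
      rw [cc_succ]
      apply mul_nonpos_of_nonpos_of_nonneg this
      apply div_nonneg
      · have : (1:ℝ) ≤ m := by exact_mod_cast hm
        linarith
      · positivity

lemma neg_cc_telescope (n : ℕ) :
    -cc (n+1) = 2*((n:ℝ)+1)*(-cc (n+1)) - 2*((n:ℝ)+2)*(-cc (n+1+1)) := by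
  have h := cc_succ (n+1)
  push_cast at h
  have hne : ((n:ℝ)+2) ≠ 0 := by positivity
  have h' : ((n:ℝ)+2) * cc (n+1+1) = cc (n+1) * ((n:ℝ)+1/2) := by
    rw [h]; field_simp; ring
  linear_combination -2 * h'

lemma sum_range_neg_cc_le (N : ℕ) : ∑ n ∈ Finset.range N, (-cc (n+1)) ≤ 1 := by
  set g : ℕ → ℝ := fun n => 2*((n:ℝ)+1)*(-cc (n+1)) with hg
  have h1 : ∑ n ∈ Finset.range N, (-cc (n+1)) = g 0 - g N := by
    rw [← Finset.sum_range_sub' g N]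
    refine Finset.sum_congr rfl fun n _ => ?_
    simp only [hg]
    push_cast
    linear_combination neg_cc_telescope n
  have hg0 : g 0 = 1 := by norm_num [hg, cc_one]
  have hgN : 0 ≤ g N := by
    simp only [hg]
    have := cc_nonpos (n := N + 1) (by omega)
    nlinarith [Nat.cast_nonneg (α := ℝ) N]
  rw [h1, hg0]; linarith

lemma summable_neg_cc : Summable fun n => -cc (n+1) :=
  summable_of_sum_range_le (fun n => neg_nonneg.2 (cc_nonpos n.succ_pos)) sum_range_neg_cc_le

lemma tsum_neg_cc_le : ∑' n, -cc (n+1) ≤ 1 :=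
  Real.tsum_le_of_sum_range_le (fun n => neg_nonneg.2 (cc_nonpos n.succ_pos)) sum_range_neg_cc_le

lemma summable_abs_cc : Summable fun n => |cc n| := by
  rw [← summable_nat_add_iff 1]
  refine summable_neg_cc.congr fun n => ?_
  rw [abs_of_nonpos (cc_nonpos n.succ_pos)]
lemma desc_smeval (r : ℝ) (n : ℕ) :
    (descPochhammer ℤ n).smeval r = ∏ i ∈ Finset.range n, (r - i) := by
  induction n with
  | zero => simp [descPochhammer_zero, Polynomial.smeval_one]
  | succ m ih =>
    rw [descPochhammer_succ_right, Polynomial.smeval_mul, ih, Finset.prod_range_succ]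
    congr 1
    simp [Polynomial.smeval_sub, Polynomial.smeval_X, Polynomial.smeval_natCast]

lemma genBinomHalf_eq (n : ℕ) : genBinomHalf n = Ring.choose ((1:ℝ)/2) n := by
  have h := Ring.descPochhammer_eq_factorial_smul_choose ((1:ℝ)/2) n
  rw [desc_smeval] at h
  have hfac : (0:ℝ) < (Nat.factorial n : ℝ) := by exact_mod_cast n.factorial_pos
  rw [genBinomHalf, div_eq_iff hfac.ne', h, nsmul_eq_mul]
  ring

lemma vandermonde_half (k : ℕ) :
    ∑ ij ∈ Finset.HasAntidiagonal.antidiagonal k, genBinomHalf ij.1 * genBinomHalf ij.2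
      = (Nat.choose 1 k : ℝ) := by
  have h := Ring.add_choose_eq (R := ℝ) (r := (1:ℝ)/2) (s := (1:ℝ)/2) k (Commute.all _ _)
  have h2 : ((1:ℝ)/2 + 1/2) = ((1:ℕ):ℝ) := by norm_num
  rw [h2, Ring.choose_natCast] at h
  have h3 : ∑ ij ∈ Finset.HasAntidiagonal.antidiagonal k, genBinomHalf ij.1 * genBinomHalf ij.2
      = ∑ ij ∈ Finset.HasAntidiagonal.antidiagonal k, Ring.choose ((1:ℝ)/2) ij.1 * Ring.choose ((1:ℝ)/2) ij.2 :=
    Finset.sum_congr rfl fun ij _ => by rw [genBinomHalf_eq, genBinomHalf_eq]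
  rw [h3, ← h]

lemma summable_abs_cc_pow {x : ℝ} (h0 : 0 ≤ x) (h1 : x ≤ 1) :
    Summable fun n => |cc n * x ^ n| := by
  refine Summable.of_nonneg_of_le (fun n => abs_nonneg _) (fun n => ?_) summable_abs_cc
  rw [abs_mul]
  calc |cc n| * |x ^ n| ≤ |cc n| * 1 := by
        apply mul_le_mul_of_nonneg_left _ (abs_nonneg _)
        rw [abs_pow]
        exact pow_le_one₀ (abs_nonneg x) (abs_le.2 ⟨by linarith, h1⟩)
    _ = |cc n| := mul_one _

lemma summable_cc_pow {x : ℝ} (h0 : 0 ≤ x) (h1 : x ≤ 1) :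
    Summable fun n => cc n * x ^ n :=
  (summable_abs_cc_pow h0 h1).of_abs

lemma tsum_cc_sq {x : ℝ} (h0 : 0 ≤ x) (h1 : x ≤ 1) :
    (∑' n, cc n * x ^ n) * (∑' n, cc n * x ^ n) = 1 - x := by
  have hnorm : Summable fun n => ‖cc n * x ^ n‖ := summable_abs_cc_pow h0 h1
  rw [tsum_mul_tsum_eq_tsum_sum_antidiagonal_of_summable_norm hnorm hnorm]
  have hinner : ∀ k : ℕ, ∑ ij ∈ Finset.HasAntidiagonal.antidiagonal k,
      cc ij.1 * x ^ ij.1 * (cc ij.2 * x ^ ij.2) = (-x) ^ k * (Nat.choose 1 k : ℝ) := by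
    intro k
    have : ∀ ij ∈ Finset.HasAntidiagonal.antidiagonal k,
        cc ij.1 * x ^ ij.1 * (cc ij.2 * x ^ ij.2)
          = (-x) ^ k * (genBinomHalf ij.1 * genBinomHalf ij.2) := by
      intro ij hij
      have hk : ij.1 + ij.2 = k := Finset.HasAntidiagonal.mem_antidiagonal.1 hij
      simp only [cc]
      rw [← hk]
      ring
    rw [Finset.sum_congr rfl this, ← Finset.mul_sum, vandermonde_half]
  rw [tsum_congr hinner]
  rw [tsum_eq_sum (s := Finset.range 2) (fun k hk => ?_)]
  · simp [Finset.sum_range_succ]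
    ring
  · have h2 : 2 ≤ k := by simp at hk; omega
    have : Nat.choose 1 k = 0 := Nat.choose_eq_zero_of_lt (by omega)
    simp [this]

lemma tsum_cc_nonneg {x : ℝ} (h0 : 0 ≤ x) (h1 : x ≤ 1) :
    0 ≤ ∑' n, cc n * x ^ n := by
  have hs := summable_cc_pow h0 h1
  have hs1 : Summable fun n => cc (n + 1) * x ^ (n + 1) :=
    (summable_nat_add_iff (f := fun n => cc n * x ^ n) 1).2 hs
  rw [Summable.tsum_eq_zero_add hs]
  have hneg : ∑' n, -(cc (n + 1) * x ^ (n + 1)) ≤ 1 := by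
    refine le_trans (Summable.tsum_le_tsum (fun n => ?_) hs1.neg summable_neg_cc) tsum_neg_cc_le
    have hc := cc_nonpos (n := n + 1) n.succ_pos
    have hxp : x ^ (n + 1) ≤ 1 := pow_le_one₀ h0 h1
    nlinarith [pow_nonneg h0 (n + 1)]
  rw [tsum_neg] at hneg
  simp only [cc_zero, pow_zero, mul_one]
  linarith

lemma sqrt_eq_tsum_cc {x : ℝ} (h0 : 0 ≤ x) (h1 : x ≤ 1) :
    Real.sqrt (1 - x) = ∑' n, cc n * x ^ n := by
  rw [← tsum_cc_sq h0 h1, Real.sqrt_mul_self (tsum_cc_nonneg h0 h1)]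

open MeasureTheory in
lemma gammaKernel_integrable {α β : ℝ} (hα : 0 < α) (hβ : 0 < β) :
    IntegrableOn (fun u : ℝ => u ^ (α - 1) * Real.exp (-β * u)) (Set.Ioi 0) := by
  have := integrableOn_rpow_mul_exp_neg_mul_rpow (s := α - 1) (p := 1)
    (by linarith) one_pos hβ
  simpa [Real.rpow_one] using this

open MeasureTheory in
lemma gammaDens_integrable {α β : ℝ} (hα : 0 < α) (hβ : 0 < β) :
    IntegrableOn (fun u : ℝ => gammaDens α β u) (Set.Ioi 0) := by
  have heq : (fun u : ℝ => gammaDens α β u)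
      = fun u => (β ^ α / Real.Gamma α) * (u ^ (α - 1) * Real.exp (-β * u)) := by
    funext u; unfold gammaDens; ring
  rw [heq]
  exact (gammaKernel_integrable hα hβ).const_mul _

lemma gammaDens_nonneg {α β : ℝ} (hα : 0 < α) (hβ : 0 < β) {u : ℝ} (hu : 0 ≤ u) :
    0 ≤ gammaDens α β u := by
  unfold gammaDens
  have h1 : 0 < Real.Gamma α := Real.Gamma_pos_of_pos hα
  have h2 : (0:ℝ) ≤ u ^ (α - 1) := Real.rpow_nonneg hu _
  have h3 : (0:ℝ) < β ^ α := Real.rpow_pos_of_pos hβ _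
  positivity

lemma gammaDens_measurable (α β : ℝ) : Measurable (fun u : ℝ => gammaDens α β u) := by
  unfold gammaDens
  fun_prop

open MeasureTheory

lemma Fterm_measurable (α β : ℝ) (n : ℕ) :
    Measurable (fun u : ℝ => cc n * (1 / (1 + u) ^ 2) ^ n * gammaDens α β u) := by
  apply Measurable.mul _ (gammaDens_measurable α β)
  fun_prop

lemma pow_factor_mem {u : ℝ} (hu : 0 < u) :
    0 ≤ 1 / (1 + u) ^ 2 ∧ 1 / (1 + u) ^ 2 ≤ 1 := by
  have h1 : (1:ℝ) < 1 + u := by linarith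
  have h2 : (1:ℝ) ≤ (1 + u) ^ 2 := by nlinarith
  constructor
  · positivity
  · rw [div_le_one (by positivity)]; linarith

lemma Fterm_bound {α β : ℝ} (hα : 0 < α) (hβ : 0 < β) (n : ℕ) {u : ℝ} (hu : u ∈ Set.Ioi (0:ℝ)) :
    ‖cc n * (1 / (1 + u) ^ 2) ^ n * gammaDens α β u‖ ≤ |cc n| * gammaDens α β u := by
  obtain ⟨hx0, hx1⟩ := pow_factor_mem hu
  have hg := gammaDens_nonneg hα hβ (le_of_lt hu)
  rw [Real.norm_eq_abs, abs_mul, abs_mul, abs_of_nonneg hg, abs_of_nonneg (pow_nonneg hx0 n)]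
  have hp1 : (1 / (1 + u) ^ 2) ^ n ≤ 1 := pow_le_one₀ hx0 hx1
  calc |cc n| * (1 / (1 + u) ^ 2) ^ n * gammaDens α β u
      ≤ |cc n| * 1 * gammaDens α β u :=
        mul_le_mul_of_nonneg_right (mul_le_mul_of_nonneg_left hp1 (abs_nonneg _)) hg
    _ = |cc n| * gammaDens α β u := by ring

lemma Fterm_integrable {α β : ℝ} (hα : 0 < α) (hβ : 0 < β) (n : ℕ) :
    IntegrableOn (fun u : ℝ => cc n * (1 / (1 + u) ^ 2) ^ n * gammaDens α β u)
      (Set.Ioi 0) := by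
  refine Integrable.mono' ((gammaDens_integrable hα hβ).const_mul |cc n|)
    ((Fterm_measurable α β n).aestronglyMeasurable) ?_
  filter_upwards [ae_restrict_mem measurableSet_Ioi] with u hu
  exact Fterm_bound hα hβ n hu

lemma Fterm_norm_integral_le {α β : ℝ} (hα : 0 < α) (hβ : 0 < β) (n : ℕ) :
    ∫ u in Set.Ioi (0:ℝ), ‖cc n * (1 / (1 + u) ^ 2) ^ n * gammaDens α β u‖
      ≤ |cc n| * ∫ u in Set.Ioi (0:ℝ), gammaDens α β u := by
  rw [← integral_const_mul]
  refine integral_mono_ae (Fterm_integrable hα hβ n).norm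
    ((gammaDens_integrable hα hβ).const_mul _) ?_
  filter_upwards [ae_restrict_mem measurableSet_Ioi] with u hu
  exact Fterm_bound hα hβ n hu

lemma Fterm_integral {α β : ℝ} (hα : 0 < α) (hβ : 0 < β) (n : ℕ) :
    ∫ u in Set.Ioi (0:ℝ), cc n * (1 / (1 + u) ^ 2) ^ n * gammaDens α β u
      = β ^ α * ((-1:ℝ) ^ n * genBinomHalf n * KummerU α (1 - 2 * (n:ℝ) + α) β) := by
  have hΓ : (0:ℝ) < Real.Gamma α := Real.Gamma_pos_of_pos hα
  have key : Set.EqOn (fun u : ℝ => cc n * (1 / (1 + u) ^ 2) ^ n * gammaDens α β u)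
      (fun u : ℝ => (cc n * β ^ α / Real.Gamma α) *
        ((1 + u) ^ ((1 - 2 * (n:ℝ) + α) - α - 1) * u ^ (α - 1) * Real.exp (-β * u)))
      (Set.Ioi (0:ℝ)) := by
    intro u hu
    have hpos : (0:ℝ) < 1 + u := by have : (0:ℝ) < u := hu; linarith
    have h1 : ((1:ℝ) + u) ^ ((1 - 2 * (n:ℝ) + α) - α - 1) = (1 / (1 + u) ^ 2) ^ n := by
      rw [show (1 - 2 * (n:ℝ) + α) - α - 1 = -((2 * n : ℕ) : ℝ) by push_cast; ring]
      rw [Real.rpow_neg hpos.le, Real.rpow_natCast, pow_mul, one_div, inv_pow]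
    simp only [h1]
    unfold gammaDens
    field_simp
  rw [setIntegral_congr_fun measurableSet_Ioi key, integral_const_mul, KummerU]
  unfold cc
  ring

theorem expected_sqrt_dispersion_gamma (α β : ℝ) (hα : 0 < α) (hβ : 0 < β) :
    (∫ u in Set.Ioi (0 : ℝ), Real.sqrt (1 - 1 / (1 + u) ^ 2) * gammaDens α β u) =
      β ^ α * ∑' n : ℕ, (-1 : ℝ) ^ n * genBinomHalf n *
        KummerU α (1 - 2 * (n : ℝ) + α) β := by
  have hstep1 : Set.EqOn (fun u : ℝ => Real.sqrt (1 - 1 / (1 + u) ^ 2) * gammaDens α β u)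
      (fun u : ℝ => ∑' n : ℕ, cc n * (1 / (1 + u) ^ 2) ^ n * gammaDens α β u)
      (Set.Ioi (0:ℝ)) := by
    intro u hu
    obtain ⟨hx0, hx1⟩ := pow_factor_mem hu
    simp only
    rw [sqrt_eq_tsum_cc hx0 hx1, ← tsum_mul_right]
  rw [setIntegral_congr_fun measurableSet_Ioi hstep1]
  have hsum : Summable fun n : ℕ =>
      ∫ u in Set.Ioi (0:ℝ), ‖cc n * (1 / (1 + u) ^ 2) ^ n * gammaDens α β u‖ := by
    refine Summable.of_nonneg_of_le (fun n => integral_nonneg fun u => norm_nonneg _)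
      (fun n => Fterm_norm_integral_le hα hβ n)
      (summable_abs_cc.mul_right _)
  rw [← integral_tsum_of_summable_integral_norm (fun n => Fterm_integrable hα hβ n) hsum]
  rw [tsum_congr (fun n => Fterm_integral hα hβ n), tsum_mul_left]
end

section
/- Let γ be Gamma distributed with shape α > 0 and rate β > 0, and let E_α(β) = ∫₁^∞ e^{−βt} t^{−α} dt denote the generalized exponential integral. Then E[1 − 1/(2(1+γ)²)] = (1/2)·(2 − β + e^β β (α + β − 1) E_α(β)). -/
/-- Generalized exponential integral E_n(z) = ∫₁^∞ e^{−zt} t^{−n} dt. -/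
noncomputable def expIntE (n z : ℝ) : ℝ :=
  ∫ t in Set.Ioi (1 : ℝ), Real.exp (-z * t) * t ^ (-n)

open Real MeasureTheory Set Filter

lemma gamma_int {a b : ℝ} (ha : 0 < a) (hb : 0 < b) :
    ∫ x in Ioi (0:ℝ), x ^ (a - 1) * Real.exp (-(b * x)) = b ^ (-a) * Real.Gamma a := by
  have h := integral_rpow_mul_exp_neg_mul_rpow (p := 1) (q := a - 1) zero_lt_one
    (by linarith) hb
  simp_rw [rpow_one, neg_mul] at h ⊢
  rw [h]
  norm_num
lemma gamma_integrable {a b : ℝ} (ha : 0 < a) (hb : 0 < b) :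
    IntegrableOn (fun x => x ^ (a - 1) * Real.exp (-(b * x))) (Ioi (0:ℝ)) := by
  have h := integrableOn_rpow_mul_exp_neg_mul_rpow (p := 1) (s := a - 1) (by linarith)
    zero_lt_one hb
  simp_rw [rpow_one, neg_mul] at h ⊢
  exact h
lemma int_s_val {c : ℝ} (hc : 0 < c) :
    ∫ s in Ioi (0:ℝ), s * Real.exp (-(c * s)) = ((c ^ 2)⁻¹ : ℝ) := by
  have h := gamma_int (a := 2) (b := c) two_pos hc
  have h2 : ∀ s : ℝ, s ^ ((2:ℝ) - 1) = s := by intro s; norm_num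
  simp_rw [h2] at h
  rw [h, Real.Gamma_two, mul_one]
  rw [show (-2:ℝ) = ((-2:ℤ):ℝ) by norm_num, rpow_intCast, zpow_neg]
  congr 1
lemma int_s_integrable {c : ℝ} (hc : 0 < c) :
    IntegrableOn (fun s => s * Real.exp (-(c * s))) (Ioi (0:ℝ)) := by
  have h := gamma_integrable (a := 2) (b := c) two_pos hc
  have h2 : ∀ s : ℝ, s ^ ((2:ℝ) - 1) = s := by intro s; norm_num
  simp_rw [h2] at h
  exact h
lemma int_exp_rpow {b s : ℝ} (hb : 0 < b) (hs : s ≤ 1) :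
    IntegrableOn (fun t => Real.exp (-b * t) * t ^ s) (Ioi (1:ℝ)) := by
  have hmaj : IntegrableOn (fun t => t * Real.exp (-(b * t))) (Ioi (1:ℝ)) := by
    have h2 : ∀ s : ℝ, s ^ ((2:ℝ) - 1) = s := by intro s; norm_num
    have := (gamma_integrable (a := 2) (b := b) two_pos hb).mono_set
      (Ioi_subset_Ioi zero_le_one)
    simpa [h2] using this
  refine Integrable.mono hmaj ?_ ?_
  · apply Measurable.aestronglyMeasurable; fun_prop
  · filter_upwards [ae_restrict_mem measurableSet_Ioi] with t ht
    have h1 : (1:ℝ) ≤ t := le_of_lt ht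
    have h0 : (0:ℝ) < t := lt_of_lt_of_le zero_lt_one h1
    rw [Real.norm_eq_abs, Real.norm_eq_abs, abs_of_nonneg (by positivity),
      abs_of_nonneg (by positivity)]
    calc Real.exp (-b * t) * t ^ s ≤ Real.exp (-b * t) * t ^ (1:ℝ) := by
          exact mul_le_mul_of_nonneg_left (rpow_le_rpow_of_exponent_le h1 hs)
            (Real.exp_pos _).le
      _ = t * Real.exp (-(b * t)) := by rw [rpow_one, neg_mul]; ring

lemma trunc_integrable {α β : ℝ} (hα : 0 < α) (hβ : 0 < β) :
    IntegrableOn (fun u => u ^ (α - 1) * Real.exp (-(β * u)) * ((1 + u) ^ 2)⁻¹)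
      (Ioi (0:ℝ)) := by
  refine Integrable.mono (gamma_integrable hα hβ) ?_ ?_
  · apply Measurable.aestronglyMeasurable; fun_prop
  · filter_upwards [ae_restrict_mem measurableSet_Ioi] with u hu
    have hu0 : (0:ℝ) < u := hu
    have hr : (0:ℝ) ≤ u ^ (α - 1) := Real.rpow_nonneg hu0.le _
    rw [Real.norm_eq_abs, Real.norm_eq_abs, abs_of_nonneg (by positivity),
      abs_of_nonneg (by positivity)]
    have hle : ((1 + u) ^ 2)⁻¹ ≤ 1 := by
      rw [inv_le_one_iff₀]; right; nlinarith
    nlinarith [Real.exp_pos (-(β * u)), mul_nonneg hr (Real.exp_pos (-(β * u))).le]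

lemma expIntE_rec {α β : ℝ} (hα : 0 < α) (hβ : 0 < β) :
    β * expIntE (α - 1) β = Real.exp (-β) + (1 - α) * expIntE α β := by
  have key : ∫ t in Ioi (1:ℝ),
      ((1 - α) * (Real.exp (-β * t) * t ^ (-α)) - β * (Real.exp (-β * t) * t ^ (-(α - 1))))
      = 0 - Real.exp (-β * 1) * (1:ℝ) ^ (-(α-1)) := by
    apply integral_Ioi_of_hasDerivAt_of_tendsto
      (f := fun t => Real.exp (-β * t) * t ^ (-(α - 1)))
    · refine ContinuousAt.continuousWithinAt ?_
      exact ((Real.continuous_exp.comp (continuous_const.mul continuous_id)).continuousAt).mul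
        (Real.continuousAt_rpow_const 1 _ (Or.inl one_ne_zero))
    · intro x hx
      have hx0 : (0:ℝ) < x := lt_trans zero_lt_one hx
      have h1 : HasDerivAt (fun t : ℝ => Real.exp (-β * t)) (Real.exp (-β * x) * (-β)) x := by
        simpa using ((hasDerivAt_id x).const_mul (-β)).exp
      have h2 : HasDerivAt (fun t : ℝ => t ^ (-(α - 1))) (-(α-1) * x ^ (-(α-1) - 1)) x :=
        Real.hasDerivAt_rpow_const (Or.inl hx0.ne')
      have := h1.fun_mul h2
      refine this.congr_deriv ?_
      have : x ^ (-(α-1) - 1) = x ^ (-α) := by ring_nf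
      rw [this]
      ring
    · apply Integrable.sub
      · exact ((int_exp_rpow hβ (by linarith : -α ≤ 1)).const_mul _)
      · exact ((int_exp_rpow hβ (by linarith : -(α-1) ≤ 1)).const_mul _)
    · have h := tendsto_rpow_mul_exp_neg_mul_atTop_nhds_zero (-(α-1)) β hβ
      refine h.congr' ?_
      filter_upwards with x using by ring
  rw [integral_sub (((int_exp_rpow hβ (by linarith : -α ≤ 1)).const_mul _))
    (((int_exp_rpow hβ (by linarith : -(α-1) ≤ 1)).const_mul _)),
    integral_const_mul, integral_const_mul] at key
  simp only [Real.one_rpow, mul_one, mul_neg_one, neg_mul, one_mul] at key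
  unfold expIntE
  have hns : -(α - 1) = 1 - α := by ring
  rw [hns] at key
  simp only [neg_mul] at key ⊢
  rw [hns]
  linarith [key]

lemma cov {α β : ℝ} (hα : 0 < α) (hβ : 0 < β) :
    ∫ s in Ioi (0:ℝ), s * Real.exp (-s) * (β + s) ^ (-α)
      = β ^ 2 * β ^ (-α) * Real.exp β * (expIntE (α - 1) β - expIntE α β) := by
  set g : ℝ → ℝ := fun s => s * Real.exp (-s) * (β + s) ^ (-α) with hg
  have step1 : ∫ s in Ioi (0:ℝ), g s = β * ∫ x in Ioi (0:ℝ), g (β * x) := by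
    rw [integral_comp_mul_left_Ioi g 0 hβ, mul_zero, smul_eq_mul, ← mul_assoc,
      mul_inv_cancel₀ hβ.ne', one_mul]
  have step2 : ∫ x in Ioi (0:ℝ), g (β * x)
      = β * β ^ (-α) * ∫ x in Ioi (0:ℝ), x * Real.exp (-β * x) * (1 + x) ^ (-α) := by
    rw [← integral_const_mul]
    refine setIntegral_congr_fun measurableSet_Ioi (fun x hx => ?_)
    have hx0 : (0:ℝ) < x := hx
    have hsplit : β + β * x = β * (1 + x) := by ring
    simp only [hg, hsplit, Real.mul_rpow hβ.le (by positivity : (0:ℝ) ≤ 1 + x)]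
    rw [neg_mul]
    ring
  have step3 : ∫ x in Ioi (0:ℝ), x * Real.exp (-β * x) * (1 + x) ^ (-α)
      = Real.exp β * ∫ t in Ioi (1:ℝ), (t - 1) * Real.exp (-β * t) * t ^ (-α) := by
    have hemb := measurableEmbedding_addRight (1:ℝ)
    have hmp := measurePreserving_add_right (volume : Measure ℝ) 1
    have hpre : (fun x : ℝ => x + 1) ⁻¹' Ioi 1 = Ioi 0 := by
      ext x; simp [Set.mem_Ioi]
    have h := hmp.setIntegral_preimage_emb hemb
      (fun t => (t - 1) * Real.exp (-β * t) * t ^ (-α)) (Ioi 1)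
    rw [hpre] at h
    have h2 : ∫ x in Ioi (0:ℝ), (x + 1 - 1) * Real.exp (-β * (x + 1)) * (x + 1) ^ (-α)
        = (∫ x in Ioi (0:ℝ), x * Real.exp (-β * x) * (1 + x) ^ (-α)) * Real.exp (-β) := by
      rw [← integral_mul_const]
      refine setIntegral_congr_fun measurableSet_Ioi (fun x hx => ?_)
      have : -β * (x + 1) = -β * x + -β := by ring
      rw [this, Real.exp_add]
      have : x + 1 - 1 = x := by ring
      rw [this, add_comm x 1]
      ring
    rw [h2] at h
    rw [← h, ← mul_assoc, mul_comm (Real.exp β), mul_assoc, ← Real.exp_add]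
    simp
  have step4 : ∫ t in Ioi (1:ℝ), (t - 1) * Real.exp (-β * t) * t ^ (-α)
      = expIntE (α - 1) β - expIntE α β := by
    have hcong : ∀ t ∈ Ioi (1:ℝ), (t - 1) * Real.exp (-β * t) * t ^ (-α)
        = Real.exp (-β * t) * t ^ (-(α - 1)) - Real.exp (-β * t) * t ^ (-α) := by
      intro t ht
      have ht0 : (0:ℝ) < t := lt_trans zero_lt_one ht
      have : t ^ (-(α - 1)) = t * t ^ (-α) := by
        rw [show -(α - 1) = 1 + (-α) by ring, Real.rpow_add ht0, Real.rpow_one]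
      rw [this]
      ring
    rw [setIntegral_congr_fun measurableSet_Ioi hcong,
      integral_sub (int_exp_rpow hβ (by linarith)) (int_exp_rpow hβ (by linarith))]
    rfl
  rw [step1, step2, step3, step4]
  ring

lemma fubini_key {α β : ℝ} (hα : 0 < α) (hβ : 0 < β) :
    ∫ u in Ioi (0:ℝ), u ^ (α - 1) * Real.exp (-(β * u)) * ((1 + u) ^ 2)⁻¹
      = Real.Gamma α * ∫ s in Ioi (0:ℝ), s * Real.exp (-s) * (β + s) ^ (-α) := by
  set μ : Measure ℝ := volume.restrict (Ioi 0) with hμ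
  set F : ℝ → ℝ → ℝ :=
    fun u s => u ^ (α - 1) * Real.exp (-(β * u)) * (s * Real.exp (-((1 + u) * s))) with hF
  have hmeas : AEStronglyMeasurable (Function.uncurry F) (μ.prod μ) := by
    apply Measurable.aestronglyMeasurable
    fun_prop
  have h1 : ∀ u ∈ Ioi (0:ℝ), ∫ s in Ioi (0:ℝ), F u s
      = u ^ (α - 1) * Real.exp (-(β * u)) * ((1 + u) ^ 2)⁻¹ := by
    intro u hu
    have hu0 : (0:ℝ) < u := hu
    simp only [hF]
    rw [integral_const_mul, int_s_val (by positivity : (0:ℝ) < 1 + u)]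
  have hsect : ∀ᵐ u ∂μ, Integrable (fun s => F u s) μ := by
    filter_upwards [ae_restrict_mem measurableSet_Ioi] with u hu
    have hu0 : (0:ℝ) < u := hu
    exact ((int_s_integrable (by positivity : (0:ℝ) < 1 + u)).const_mul _)
  have htarget : Integrable
      (fun u => u ^ (α - 1) * Real.exp (-(β * u)) * ((1 + u) ^ 2)⁻¹) μ :=
    trunc_integrable hα hβ
  have hnorm : Integrable (fun u => ∫ s, ‖F u s‖ ∂μ) μ := by
    refine htarget.congr ?_
    filter_upwards [ae_restrict_mem measurableSet_Ioi] with u hu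
    have hu0 : (0:ℝ) < u := hu
    have : (∫ s, ‖F u s‖ ∂μ) = ∫ s in Ioi (0:ℝ), F u s := by
      rw [hμ]
      refine setIntegral_congr_fun measurableSet_Ioi (fun s hs => ?_)
      have hs0 : (0:ℝ) < s := hs
      have hr : (0:ℝ) ≤ u ^ (α - 1) := Real.rpow_nonneg hu0.le _
      rw [Real.norm_eq_abs, abs_of_nonneg (by positivity)]
    rw [this, h1 u hu]
  have hint : Integrable (Function.uncurry F) (μ.prod μ) :=
    (integrable_prod_iff hmeas).2 ⟨hsect, hnorm⟩
  have hswap := integral_integral_swap hint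
  have hL : (∫ u in Ioi (0:ℝ), u ^ (α - 1) * Real.exp (-(β * u)) * ((1 + u) ^ 2)⁻¹)
      = ∫ u, (∫ s, F u s ∂μ) ∂μ := by
    rw [hμ]
    exact (setIntegral_congr_fun measurableSet_Ioi h1).symm
  have h2 : ∀ s ∈ Ioi (0:ℝ), (∫ u, F u s ∂μ)
      = Real.Gamma α * (s * Real.exp (-s) * (β + s) ^ (-α)) := by
    intro s hs
    have hs0 : (0:ℝ) < s := hs
    have hFeq : ∀ u : ℝ, F u s
        = s * Real.exp (-s) * (u ^ (α - 1) * Real.exp (-((β + s) * u))) := by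
      intro u
      have e1 : Real.exp (-(β * u)) * Real.exp (-((1 + u) * s))
          = Real.exp (-s) * Real.exp (-((β + s) * u)) := by
        rw [← Real.exp_add, ← Real.exp_add]; congr 1; ring
      simp only [hF]
      linear_combination (s * u ^ (α - 1)) * e1
    rw [hμ]
    simp_rw [hFeq]
    rw [integral_const_mul, gamma_int hα (by positivity : (0:ℝ) < β + s)]
    ring
  have hR : (∫ s, (∫ u, F u s ∂μ) ∂μ)
      = Real.Gamma α * ∫ s in Ioi (0:ℝ), s * Real.exp (-s) * (β + s) ^ (-α) := by
    rw [← integral_const_mul, hμ]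
    exact setIntegral_congr_fun measurableSet_Ioi h2
  rw [hL, hswap, hR]

theorem expected_truncated_dispersion_gamma (α β : ℝ) (hα : 0 < α) (hβ : 0 < β) :
    (∫ u in Set.Ioi (0 : ℝ), (1 - 1 / (2 * (1 + u) ^ 2)) * gammaDens α β u) =
      (1 / 2) * (2 - β + Real.exp β * β * (α + β - 1) * expIntE α β) := by
  have hΓ : 0 < Real.Gamma α := Real.Gamma_pos_of_pos hα
  have hpow : β ^ α * β ^ (-α) = 1 := by
    rw [← Real.rpow_add hβ]; simp
  have hcong : ∀ u ∈ Ioi (0:ℝ), (1 - 1 / (2 * (1 + u) ^ 2)) * gammaDens α β u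
      = (β ^ α / Real.Gamma α) * (u ^ (α - 1) * Real.exp (-(β * u)))
        - (β ^ α / (2 * Real.Gamma α))
          * (u ^ (α - 1) * Real.exp (-(β * u)) * ((1 + u) ^ 2)⁻¹) := by
    intro u hu
    have hu0 : (0:ℝ) < u := hu
    have hc : ((1 + u) ^ 2 : ℝ) ≠ 0 := by positivity
    unfold gammaDens
    rw [neg_mul]
    field_simp
  rw [setIntegral_congr_fun measurableSet_Ioi hcong,
    integral_sub ((gamma_integrable hα hβ).const_mul _)
      ((trunc_integrable hα hβ).const_mul _),
    integral_const_mul, integral_const_mul, gamma_int hα hβ, fubini_key hα hβ, cov hα hβ]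
  have hrec := expIntE_rec hα hβ
  have hexp : Real.exp β * Real.exp (-β) = 1 := by
    rw [← Real.exp_add]; simp
  set F := expIntE α β
  set G := expIntE (α - 1) β
  have e1 : β ^ α / Real.Gamma α * (β ^ (-α) * Real.Gamma α) = 1 := by
    field_simp
    linear_combination hpow
  have e2 : β ^ α / (2 * Real.Gamma α)
      * (Real.Gamma α * (β ^ 2 * β ^ (-α) * Real.exp β * (G - F)))
      = β ^ 2 * Real.exp β * (G - F) / 2 := by
    field_simp
    linear_combination (G - F) * hpow
  rw [e1, e2]
  linear_combination (-(β * Real.exp β) / 2) * hrec + (-(β / 2)) * hexp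
end

section
/- Let γ be Gamma distributed with shape α > 0 and rate β > 0. Then ∫₀^∞ (1+u)^{−2} · β^α u^{α−1} e^{−βu}/Γ(α) du = β − 1 + e^β β (1 − α − β) E_α(β) + 1, equivalently E[(1+γ)^{−2}] = β − e^β β (α + β − 1) E_α(β), where E_α(β) = ∫₁^∞ e^{−βt} t^{−α} dt. -/
open MeasureTheory Real Set Filter Topology

lemma gammaInt {a r : ℝ} (ha : 0 < a) (hr : 0 < r) :
    IntegrableOn (fun x : ℝ => x ^ (a - 1) * Real.exp (-(r * x))) (Set.Ioi 0) := by
  have h0 : IntegrableOn (fun x : ℝ => Real.exp (-(r * x)) * (r * x) ^ (a - 1)) (Set.Ioi 0) := by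
    have := (integrableOn_Ioi_comp_mul_left_iff
      (fun x : ℝ => Real.exp (-x) * x ^ (a - 1)) 0 hr).mpr
      (by simpa using Real.GammaIntegral_convergent ha)
    simpa using this
  have h1 : IntegrableOn (fun x : ℝ => r ^ (a - 1) * (x ^ (a - 1) * Real.exp (-(r * x))))
      (Set.Ioi 0) := by
    apply h0.congr_fun ?_ measurableSet_Ioi
    intro x hx
    dsimp only
    rw [Real.mul_rpow hr.le (le_of_lt hx)]
    ring
  rw [IntegrableOn] at h1 ⊢
  rwa [integrable_const_mul_iff (isUnit_iff_ne_zero.2 (by positivity))] at h1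

lemma gammaIntVal {a r : ℝ} (ha : 0 < a) (hr : 0 < r) :
    ∫ x in Set.Ioi (0 : ℝ), x ^ (a - 1) * Real.exp (-(r * x)) = (r ^ a)⁻¹ * Real.Gamma a := by
  rw [integral_rpow_mul_exp_neg_mul_Ioi ha hr, one_div, ← Real.inv_rpow hr.le,
    Real.inv_rpow hr.le]

lemma inv_sq_eq_integral {r : ℝ} (hr : 0 < r) :
    (r ^ 2)⁻¹ = ∫ t in Set.Ioi (0 : ℝ), t * Real.exp (-(r * t)) := by
  have h := gammaIntVal (a := 2) (by norm_num) hr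
  simp only [show (2:ℝ) - 1 = 1 by norm_num, Real.rpow_one, Real.Gamma_two, mul_one] at h
  rw [h, show (2:ℝ) = ((2:ℕ):ℝ) by norm_num, Real.rpow_natCast]

lemma t_integrable {r : ℝ} (hr : 0 < r) :
    IntegrableOn (fun t : ℝ => t * Real.exp (-(r * t))) (Set.Ioi 0) := by
  have := gammaInt (a := 2) (by norm_num) hr
  simpa only [show (2:ℝ) - 1 = 1 by norm_num, Real.rpow_one] using this

lemma expRpowInt {c b : ℝ} (hb : 0 < b) :
    IntegrableOn (fun x : ℝ => Real.exp (-(b * x)) * x ^ c) (Set.Ioi 1) := by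
  set a := max (c + 1) 1 with ha_def
  have ha : 0 < a := lt_of_lt_of_le one_pos (le_max_right _ _)
  have hdom : IntegrableOn (fun x : ℝ => x ^ (a - 1) * Real.exp (-(b * x))) (Set.Ioi 1) :=
    (gammaInt ha hb).mono_set (Set.Ioi_subset_Ioi zero_le_one)
  apply Integrable.mono' hdom
  · apply Measurable.aestronglyMeasurable
    fun_prop
  · filter_upwards [ae_restrict_mem measurableSet_Ioi] with x hx
    have hx1 : (1 : ℝ) ≤ x := le_of_lt hx
    have hx0 : (0 : ℝ) < x := lt_of_lt_of_le one_pos hx1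
    rw [Real.norm_eq_abs, abs_of_nonneg (by positivity)]
    have hce : c ≤ a - 1 := by
      have := le_max_left (c + 1) 1
      linarith
    have h2 : x ^ c ≤ x ^ (a - 1) := Real.rpow_le_rpow_of_exponent_le hx1 hce
    have h3 : (0:ℝ) ≤ Real.exp (-(b * x)) := (Real.exp_pos _).le
    nlinarith [Real.rpow_nonneg hx0.le c]

lemma ibp {α β : ℝ} (hβ : 0 < β) :
    -β * (∫ s in Set.Ioi (1:ℝ), Real.exp (-(β*s)) * s ^ (1-α))
      + (1-α) * (∫ s in Set.Ioi (1:ℝ), Real.exp (-(β*s)) * s ^ (-α)) = -Real.exp (-β) := by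
  set f : ℝ → ℝ := fun s => Real.exp (-(β*s)) * s ^ (1-α) with hf
  set f' : ℝ → ℝ := fun s => -β * (Real.exp (-(β*s)) * s ^ (1-α))
      + (1-α) * (Real.exp (-(β*s)) * s ^ (-α)) with hf'
  have hd : ∀ x : ℝ, 0 < x → HasDerivAt f (f' x) x := by
    intro x hx
    have h1 : HasDerivAt (fun s : ℝ => -(β*s)) (-β) x := by
      have h := ((hasDerivAt_id x).const_mul β).neg
      rw [mul_one] at h
      exact h
    have h2 : HasDerivAt (fun s : ℝ => Real.exp (-(β*s))) (Real.exp (-(β*x)) * (-β)) x := h1.exp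
    have h3 : HasDerivAt (fun s : ℝ => s ^ (1-α)) ((1-α) * x ^ (1-α-1)) x :=
      Real.hasDerivAt_rpow_const (Or.inl hx.ne')
    have h4 := h2.mul h3
    convert h4 using 1
    · rfl
    · rfl
    · rfl
    rw [show (1-α-1 : ℝ) = -α by ring] at h4 ⊢
    simp only [hf']
    ring
  have f'int : IntegrableOn f' (Set.Ioi 1) :=
    ((expRpowInt (c := 1-α) hβ).const_mul (-β)).add ((expRpowInt (c := -α) hβ).const_mul (1-α))
  have htend : Tendsto f atTop (𝓝 0) := by
    refine (tendsto_rpow_mul_exp_neg_mul_atTop_nhds_zero (1-α) β hβ).congr fun x => ?_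
    rw [neg_mul, mul_comm]
  have key := integral_Ioi_of_hasDerivAt_of_tendsto (a := 1)
    ((hd 1 one_pos).continuousAt.continuousWithinAt)
    (fun x hx => hd x (lt_trans one_pos hx)) f'int htend
  have hf1 : f 1 = Real.exp (-β) := by simp [hf]
  rw [hf1, zero_sub] at key
  rw [← key]
  rw [show f' = fun s => (-β) * (Real.exp (-(β*s)) * s ^ (1-α))
      + (1-α) * (Real.exp (-(β*s)) * s ^ (-α)) from rfl]
  rw [integral_add ((expRpowInt (c := 1-α) hβ).const_mul (-β))
    ((expRpowInt (c := -α) hβ).const_mul (1-α)), integral_const_mul, integral_const_mul]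

lemma splitK {α β : ℝ} (hβ : 0 < β) :
    ∫ s in Set.Ioi (1:ℝ), (s-1) * Real.exp (-(β*s)) * s ^ (-α)
      = (∫ s in Set.Ioi (1:ℝ), Real.exp (-(β*s)) * s ^ (1-α))
        - ∫ s in Set.Ioi (1:ℝ), Real.exp (-(β*s)) * s ^ (-α) := by
  rw [← integral_sub (expRpowInt hβ) (expRpowInt hβ)]
  apply setIntegral_congr_fun measurableSet_Ioi
  intro s hs
  dsimp only
  have hs0 : (0:ℝ) < s := lt_trans one_pos hs
  rw [show (1-α : ℝ) = 1 + (-α) by ring, Real.rpow_add hs0, Real.rpow_one]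
  ring

lemma subst {α β : ℝ} (hβ : 0 < β) :
    ∫ s in Set.Ioi (1:ℝ), (s - 1) * Real.exp (-(β*s)) * s ^ (-α)
      = β^α * β⁻¹ * β⁻¹ * Real.exp (-β)
        * ∫ t in Set.Ioi (0:ℝ), t * Real.exp (-t) * ((β+t)^α)⁻¹ := by
  set g : ℝ → ℝ := fun s => (s - 1) * Real.exp (-(β*s)) * s ^ (-α) with hg
  have h1 : ∫ s in Set.Ioi (1:ℝ), g s = ∫ x in Set.Ioi (0:ℝ), g (x + 1) := by
    have hmp : MeasurePreserving (fun x : ℝ => x + 1) volume volume :=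
      measurePreserving_add_right volume 1
    have hemb : MeasurableEmbedding (fun x : ℝ => x + 1) :=
      (Homeomorph.addRight (1:ℝ)).measurableEmbedding
    have h := hmp.setIntegral_preimage_emb hemb g (Set.Ioi 1)
    rw [show (fun x : ℝ => x + 1) ⁻¹' (Set.Ioi 1) = Set.Ioi 0 by ext x; simp] at h
    exact h.symm
  have h2 : ∫ x in Set.Ioi (0:ℝ), g (x + 1) = β⁻¹ * ∫ y in Set.Ioi (0:ℝ), g (β⁻¹ * y + 1) := by
    have h := integral_comp_mul_left_Ioi (fun x => g (x + 1)) 0 (inv_pos.2 hβ)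
    rw [mul_zero, inv_inv, smul_eq_mul] at h
    rw [h]
    field_simp
  have h3 : ∀ y ∈ Set.Ioi (0:ℝ), g (β⁻¹ * y + 1)
      = (β^α * β⁻¹ * Real.exp (-β)) * (y * Real.exp (-y) * ((β+y)^α)⁻¹) := by
    intro y hy
    have hy0 : (0:ℝ) < y := hy
    have e1 : β * (β⁻¹ * y + 1) = y + β := by field_simp
    have e2 : β⁻¹ * y + 1 = β⁻¹ * (y + β) := by field_simp
    have : g (β⁻¹ * y + 1)
        = (β⁻¹ * y) * (Real.exp (-y) * Real.exp (-β)) * (β^α * ((β+y)^α)⁻¹) := by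
      rw [hg]
      dsimp only
      congr 1
      · congr 1
        · ring
        · rw [e1, show -(y+β) = -y + -β by ring, Real.exp_add]
      · rw [e2, Real.mul_rpow (inv_nonneg.2 hβ.le) (by positivity),
          Real.inv_rpow hβ.le, Real.rpow_neg hβ.le, inv_inv,
          Real.rpow_neg (by positivity), add_comm y β]
    rw [this]
    ring
  have h4 : ∫ y in Set.Ioi (0:ℝ), g (β⁻¹ * y + 1)
      = (β^α * β⁻¹ * Real.exp (-β)) * ∫ t in Set.Ioi (0:ℝ), t * Real.exp (-t) * ((β+t)^α)⁻¹ := by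
    rw [← integral_const_mul]
    exact setIntegral_congr_fun measurableSet_Ioi h3
  rw [h1, h2, h4]
  ring

lemma inner_t_val {β u : ℝ} (α : ℝ) (hu : 0 < u) :
    ∫ t in Set.Ioi (0:ℝ), u^(α-1) * Real.exp (-(β*u)) * (t * Real.exp (-((1+u)*t)))
      = u^(α-1) * Real.exp (-(β*u)) * ((1+u)^2)⁻¹ := by
  rw [integral_const_mul, ← inv_sq_eq_integral (by linarith)]

lemma fubini_int {α β : ℝ} (hα : 0 < α) (hβ : 0 < β) :
    Integrable
      (fun p : ℝ × ℝ => p.1^(α-1) * Real.exp (-(β*p.1)) * (p.2 * Real.exp (-((1+p.1)*p.2))))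
      ((volume.restrict (Set.Ioi 0)).prod (volume.restrict (Set.Ioi 0))) := by
  have hmeas : AEStronglyMeasurable
      (fun p : ℝ × ℝ => p.1^(α-1) * Real.exp (-(β*p.1)) * (p.2 * Real.exp (-((1+p.1)*p.2))))
      ((volume.restrict (Set.Ioi 0)).prod (volume.restrict (Set.Ioi 0))) := by
    apply Measurable.aestronglyMeasurable
    fun_prop
  rw [integrable_prod_iff hmeas]
  constructor
  · filter_upwards [ae_restrict_mem measurableSet_Ioi] with u hu
    have h1u : (0:ℝ) < 1 + u := by have : (0:ℝ) < u := hu; linarith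
    exact (t_integrable h1u).const_mul _
  · apply Integrable.mono' (g := fun u : ℝ => u^(α-1) * Real.exp (-(β*u))) (gammaInt hα hβ)
      hmeas.norm.integral_prod_right'
    filter_upwards [ae_restrict_mem measurableSet_Ioi] with u hu
    have hu0 : (0:ℝ) < u := hu
    have heq : (∫ t in Set.Ioi (0:ℝ),
          ‖u^(α-1) * Real.exp (-(β*u)) * (t * Real.exp (-((1+u)*t)))‖)
        = u^(α-1) * Real.exp (-(β*u)) * ((1+u)^2)⁻¹ := by
      rw [← inner_t_val α hu0]
      apply setIntegral_congr_fun measurableSet_Ioi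
      intro t ht
      have ht0 : (0:ℝ) < t := ht
      dsimp only
      rw [Real.norm_eq_abs, abs_of_nonneg (by positivity)]
    rw [heq, Real.norm_eq_abs, abs_of_nonneg (by positivity)]
    have hle : ((1+u)^2)⁻¹ ≤ 1 := by
      have h1 : (1:ℝ) ≤ (1+u)^2 := by nlinarith
      have h2 : (0:ℝ) < (1+u)^2 := by nlinarith
      rw [inv_le_one_iff₀]
      right; exact h1
    have h3 : (0:ℝ) ≤ u^(α-1) * Real.exp (-(β*u)) := by positivity
    have h4 : (0:ℝ) ≤ ((1+u)^2)⁻¹ := by positivity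
    nlinarith



theorem gamma_inverse_square_shift_moment (α β : ℝ) (hα : 0 < α) (hβ : 0 < β) :
    (∫ u in Set.Ioi (0 : ℝ), ((1 + u) ^ 2)⁻¹ * gammaDens α β u) =
      β - 1 + Real.exp β * β * (1 - α - β) * expIntE α β + 1 ∧
    (∫ u in Set.Ioi (0 : ℝ), ((1 + u) ^ 2)⁻¹ * gammaDens α β u) =
      β - Real.exp β * β * (α + β - 1) * expIntE α β := by
  have hΓ : 0 < Real.Gamma α := Real.Gamma_pos_of_pos hα
  set M := ∫ t in Set.Ioi (0:ℝ), t * Real.exp (-t) * ((β+t)^α)⁻¹ with hM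
  set J := ∫ s in Set.Ioi (1:ℝ), Real.exp (-(β*s)) * s ^ (-α) with hJ
  set J1 := ∫ s in Set.Ioi (1:ℝ), Real.exp (-(β*s)) * s ^ (1-α) with hJ1
  have hE : expIntE α β = J := by
    rw [expIntE, hJ]
    simp only [neg_mul]
  have step1 : (∫ u in Set.Ioi (0:ℝ), ((1+u)^2)⁻¹ * gammaDens α β u)
      = (β^α / Real.Gamma α)
        * ∫ u in Set.Ioi (0:ℝ), u^(α-1) * Real.exp (-(β*u)) * ((1+u)^2)⁻¹ := by
    rw [← integral_const_mul]
    apply setIntegral_congr_fun measurableSet_Ioi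
    intro u hu
    simp only [gammaDens, neg_mul]
    ring
  have step2 : (∫ u in Set.Ioi (0:ℝ), u^(α-1) * Real.exp (-(β*u)) * ((1+u)^2)⁻¹)
      = ∫ u in Set.Ioi (0:ℝ), ∫ t in Set.Ioi (0:ℝ),
          u^(α-1) * Real.exp (-(β*u)) * (t * Real.exp (-((1+u)*t))) := by
    apply setIntegral_congr_fun measurableSet_Ioi
    intro u hu
    exact (inner_t_val α hu).symm
  have step3 : (∫ u in Set.Ioi (0:ℝ), ∫ t in Set.Ioi (0:ℝ),
          u^(α-1) * Real.exp (-(β*u)) * (t * Real.exp (-((1+u)*t))))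
      = ∫ t in Set.Ioi (0:ℝ), ∫ u in Set.Ioi (0:ℝ),
          u^(α-1) * Real.exp (-(β*u)) * (t * Real.exp (-((1+u)*t))) :=
    integral_integral_swap (fubini_int hα hβ)
  have step4 : ∀ t ∈ Set.Ioi (0:ℝ),
      (∫ u in Set.Ioi (0:ℝ), u^(α-1) * Real.exp (-(β*u)) * (t * Real.exp (-((1+u)*t))))
        = Real.Gamma α * (t * Real.exp (-t) * ((β+t)^α)⁻¹) := by
    intro t ht
    have ht0 : (0:ℝ) < t := ht
    have hbt : (0:ℝ) < β + t := by linarith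
    have hpoint : Set.EqOn
        (fun u : ℝ => u^(α-1) * Real.exp (-(β*u)) * (t * Real.exp (-((1+u)*t))))
        (fun u : ℝ => (t * Real.exp (-t)) * (u^(α-1) * Real.exp (-((β+t)*u))))
        (Set.Ioi 0) := by
      intro u hu
      dsimp only
      have hx : Real.exp (-(β*u)) * Real.exp (-((1+u)*t))
          = Real.exp (-t) * Real.exp (-((β+t)*u)) := by
        rw [← Real.exp_add, ← Real.exp_add]
        congr 1
        ring
      calc u^(α-1) * Real.exp (-(β*u)) * (t * Real.exp (-((1+u)*t)))
          = t * u^(α-1) * (Real.exp (-(β*u)) * Real.exp (-((1+u)*t))) := by ring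
        _ = t * u^(α-1) * (Real.exp (-t) * Real.exp (-((β+t)*u))) := by rw [hx]
        _ = (t * Real.exp (-t)) * (u^(α-1) * Real.exp (-((β+t)*u))) := by ring
    rw [setIntegral_congr_fun measurableSet_Ioi hpoint, integral_const_mul, gammaIntVal hα hbt]
    ring
  have step5 : (∫ t in Set.Ioi (0:ℝ), ∫ u in Set.Ioi (0:ℝ),
          u^(α-1) * Real.exp (-(β*u)) * (t * Real.exp (-((1+u)*t))))
      = Real.Gamma α * M := by
    rw [hM, ← integral_const_mul]
    exact setIntegral_congr_fun measurableSet_Ioi step4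
  have hI : (∫ u in Set.Ioi (0:ℝ), ((1+u)^2)⁻¹ * gammaDens α β u) = β^α * M := by
    rw [step1, step2, step3, step5]
    field_simp
  have hK : J1 - J = β^α * β⁻¹ * β⁻¹ * Real.exp (-β) * M := by
    rw [hJ1, hJ, ← splitK hβ, subst hβ]
  have hexp : Real.exp β * Real.exp (-β) = 1 := by
    rw [← Real.exp_add]
    simp
  have hibp := ibp (α := α) (β := β) hβ
  rw [← hJ1, ← hJ] at hibp
  have hI2 : (∫ u in Set.Ioi (0:ℝ), ((1+u)^2)⁻¹ * gammaDens α β u)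
      = β^2 * Real.exp β * (J1 - J) := by
    rw [hI, hK, Real.exp_neg]
    field_simp
  rw [hE]
  constructor
  · linear_combination hI2 - (β * Real.exp β) * hibp + β * hexp
  · linear_combination hI2 - (β * Real.exp β) * hibp + β * hexp
end

section
/- For α > 0 and β > 0, the series ∑_{k=1}^∞ (1/k) Γ(k+α) U(k+α, 1+α, β) converges, where U(a,b,z) = (1/Γ(a)) ∫₀^∞ (1+u)^{b−a−1} u^{a−1} e^{−zu} du. -/
open MeasureTheory Set Real Finset

lemma integrable_rpow_exp {s β : ℝ} (hs : 0 < s) (hβ : 0 < β) :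
    IntegrableOn (fun u : ℝ => u ^ (s - 1) * Real.exp (-β * u)) (Set.Ioi 0) := by
  have h := Real.GammaIntegral_convergent hs
  have h2 : IntegrableOn (fun u : ℝ => Real.exp (-(β * u)) * (β * u) ^ (s - 1))
      (Set.Ioi 0) := by
    have h5 := MeasureTheory.integrableOn_Ioi_comp_mul_left_iff
      (fun x : ℝ => Real.exp (-x) * x ^ (s - 1)) 0 hβ
    rw [mul_zero] at h5
    exact h5.mpr h
  have h4 : IntegrableOn (fun u : ℝ =>
      ((β : ℝ) ^ (s - 1))⁻¹ * (Real.exp (-(β * u)) * (β * u) ^ (s - 1))) (Set.Ioi 0) :=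
    h2.const_mul _
  refine h4.congr_fun (fun u hu => ?_) measurableSet_Ioi
  have hu0 : 0 < u := hu
  have hb : (0:ℝ) < (β : ℝ) ^ (s - 1) := Real.rpow_pos_of_pos hβ _
  beta_reduce
  rw [Real.mul_rpow hβ.le hu0.le, neg_mul]
  field_simp

lemma integrable_hk (α β : ℝ) (hα : 0 < α) (hβ : 0 < β) (k : ℕ) :
    IntegrableOn (fun u : ℝ =>
      (1 + u) ^ (-((k : ℝ) + 1)) * u ^ ((k : ℝ) + α) * Real.exp (-β * u))
      (Set.Ioi 0) := by
  have hint : IntegrableOn (fun u : ℝ => u ^ ((k : ℝ) + α) * Real.exp (-β * u))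
      (Set.Ioi 0) := by
    have := integrable_rpow_exp (s := (k : ℝ) + α + 1) (by positivity) hβ
    simpa using this
  refine hint.mono' ?_ ?_
  · apply Measurable.aestronglyMeasurable
    fun_prop
  · filter_upwards [self_mem_ae_restrict measurableSet_Ioi] with u hu
    have hu0 : (0 : ℝ) < u := hu
    have h1 : (1 + u) ^ (-((k : ℝ) + 1)) ≤ 1 :=
      Real.rpow_le_one_of_one_le_of_nonpos (by linarith) (neg_nonpos.mpr (by positivity))
    have h2 : (0:ℝ) ≤ (1 + u) ^ (-((k : ℝ) + 1)) := Real.rpow_nonneg (by linarith) _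
    have h3 : (0:ℝ) ≤ u ^ ((k : ℝ) + α) := Real.rpow_nonneg hu0.le _
    rw [Real.norm_eq_abs, abs_of_nonneg (mul_nonneg (mul_nonneg h2 h3) (Real.exp_pos _).le)]
    calc (1 + u) ^ (-((k : ℝ) + 1)) * u ^ ((k : ℝ) + α) * Real.exp (-β * u)
        ≤ 1 * u ^ ((k : ℝ) + α) * Real.exp (-β * u) := by
          gcongr
      _ = u ^ ((k : ℝ) + α) * Real.exp (-β * u) := by ring

theorem summable_gamma_kummerU_series (α β : ℝ) (hα : 0 < α) (hβ : 0 < β) :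
    Summable (fun k : ℕ => (1 / ((k : ℝ) + 1)) * Real.Gamma (((k : ℝ) + 1) + α) *
      KummerU (((k : ℝ) + 1) + α) (1 + α) β) := by
  set F : ℕ → ℝ → ℝ := fun k u =>
    (1 + u) ^ (-((k : ℝ) + 1)) * u ^ ((k : ℝ) + α) * Real.exp (-β * u) with hF
  have hGamma : ∀ k : ℕ, (0 : ℝ) < Real.Gamma (((k : ℝ) + 1) + α) := fun k =>
    Real.Gamma_pos_of_pos (by positivity)
  have hterm : ∀ k : ℕ,
      (1 / ((k : ℝ) + 1)) * Real.Gamma (((k : ℝ) + 1) + α) *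
        KummerU (((k : ℝ) + 1) + α) (1 + α) β
      = (1 / ((k : ℝ) + 1)) * ∫ u in Set.Ioi (0 : ℝ), F k u := by
    intro k
    unfold KummerU
    have he1 : (1 + α) - (((k : ℝ) + 1) + α) - 1 = -((k : ℝ) + 1) := by ring
    have he2 : (((k : ℝ) + 1) + α) - 1 = (k : ℝ) + α := by ring
    rw [he1, he2]
    have hG := (hGamma k).ne'
    field_simp [hF]
    ring
    congr 1; ext u
    show _ = (1 + u) ^ (-((k : ℝ) + 1)) * u ^ ((k : ℝ) + α) * Real.exp (-β * u)
    ring_nf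
  rw [funext hterm]
  -- comparison constant
  set C : ℝ := ∫ u in Set.Ioi (0 : ℝ), u ^ α * Real.exp (-β * u) with hC
  have hCint : IntegrableOn (fun u : ℝ => u ^ α * Real.exp (-β * u)) (Set.Ioi 0) := by
    have := integrable_rpow_exp (s := α + 1) (by positivity) hβ
    simpa using this
  apply summable_of_sum_range_le (c := C)
  · intro k
    apply mul_nonneg (by positivity)
    apply setIntegral_nonneg measurableSet_Ioi
    intro u hu
    have hu0 : (0:ℝ) < u := hu
    have h2 : (0:ℝ) ≤ (1 + u) ^ (-((k : ℝ) + 1)) := Real.rpow_nonneg (by linarith) _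
    have h3 : (0:ℝ) ≤ u ^ ((k : ℝ) + α) := Real.rpow_nonneg hu0.le _
    positivity
  · intro n
    have hint : ∀ k : ℕ, IntegrableOn (fun u => (1 / ((k : ℝ) + 1)) * F k u) (Set.Ioi 0) :=
      fun k => (integrable_hk α β hα hβ k).const_mul _
    have hsum : ∑ k ∈ Finset.range n, (1 / ((k : ℝ) + 1)) * ∫ u in Set.Ioi (0:ℝ), F k u
        = ∫ u in Set.Ioi (0:ℝ), ∑ k ∈ Finset.range n, (1 / ((k : ℝ) + 1)) * F k u := by
      rw [MeasureTheory.integral_finset_sum _ (fun k _ => hint k)]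
      simp_rw [MeasureTheory.integral_const_mul]
    rw [hsum]
    apply setIntegral_mono_on
      ((MeasureTheory.integrable_finset_sum _ (fun k _ => hint k)))
      hCint measurableSet_Ioi
    intro u hu
    have hu0 : (0:ℝ) < u := hu
    have h1u : (0:ℝ) < 1 + u := by linarith
    set t : ℝ := u / (1 + u) with ht
    have ht0 : 0 ≤ t := by positivity
    have ht1 : t < 1 := by rw [div_lt_one h1u]; linarith
    -- rewrite each summand
    have hsummand : ∀ k : ℕ, (1 / ((k : ℝ) + 1)) * F k u
        ≤ t ^ (k + 1) * (u ^ (α - 1) * Real.exp (-β * u)) := by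
      intro k
      have hF' : F k u = t ^ (k + 1) * (u ^ (α - 1) * Real.exp (-β * u)) := by
        simp only [hF]
        have e1 : u ^ ((k : ℝ) + α) = u ^ ((k : ℝ) + 1) * u ^ (α - 1) := by
          rw [← Real.rpow_add hu0]; ring_nf
        have e2 : (1 + u) ^ (-((k : ℝ) + 1)) = ((1 + u) ^ ((k : ℝ) + 1))⁻¹ :=
          Real.rpow_neg h1u.le _
        have e3 : ∀ x : ℝ, 0 < x → x ^ ((k : ℝ) + 1) = x ^ (k + 1 : ℕ) := by
          intro x hx
          rw [← Real.rpow_natCast x (k+1)]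
          norm_num
        rw [e1, e2, e3 u hu0, e3 (1+u) h1u, ht, div_pow]
        field_simp
      rw [hF']
      have : (1 / ((k : ℝ) + 1)) ≤ 1 := by
        rw [div_le_one (by positivity)]; simp
      calc (1 / ((k : ℝ) + 1)) * (t ^ (k + 1) * (u ^ (α - 1) * Real.exp (-β * u)))
          ≤ 1 * (t ^ (k + 1) * (u ^ (α - 1) * Real.exp (-β * u))) := by
            apply mul_le_mul_of_nonneg_right this
            have := Real.rpow_nonneg hu0.le (α - 1)
            positivity
        _ = t ^ (k + 1) * (u ^ (α - 1) * Real.exp (-β * u)) := by ring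
    calc ∑ k ∈ Finset.range n, (1 / ((k : ℝ) + 1)) * F k u
        ≤ ∑ k ∈ Finset.range n, t ^ (k + 1) * (u ^ (α - 1) * Real.exp (-β * u)) :=
          Finset.sum_le_sum (fun k _ => hsummand k)
      _ = (∑ k ∈ Finset.range n, t ^ (k + 1)) * (u ^ (α - 1) * Real.exp (-β * u)) := by
          rw [Finset.sum_mul]
      _ ≤ u * (u ^ (α - 1) * Real.exp (-β * u)) := by
          apply mul_le_mul_of_nonneg_right _ (by
            have := Real.rpow_nonneg hu0.le (α - 1); positivity)
          have hgeom : ∑ k ∈ Finset.range n, t ^ (k + 1)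
              = t * ∑ k ∈ Finset.range n, t ^ k := by
            rw [Finset.mul_sum]; exact Finset.sum_congr rfl (fun k _ => by ring)
          rw [hgeom]
          have hg : ∑ k ∈ Finset.range n, t ^ k ≤ (1 - t)⁻¹ := by
            have h := geom_sum_mul t n
            have h1t : 0 < 1 - t := by linarith
            rw [inv_eq_one_div, le_div_iff₀ h1t]
            nlinarith [pow_nonneg ht0 n]
          have h1t : (1:ℝ) - t = 1 / (1 + u) := by
            rw [ht]; field_simp
            ring
          calc t * ∑ k ∈ Finset.range n, t ^ k ≤ t * (1 - t)⁻¹ := by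
                apply mul_le_mul_of_nonneg_left hg ht0
            _ = u := by rw [h1t, ht]; field_simp
      _ = u ^ α * Real.exp (-β * u) := by
          have e : u ^ α = u * u ^ (α - 1) := by
            nth_rewrite 1 [show α = 1 + (α - 1) by ring]
            rw [Real.rpow_add hu0, Real.rpow_one]
          rw [e]; ring
end
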